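/- There exists an XOR decision tree computing MAJORITY on N-bit inputs (for N ≥ 1) with cost at most N + 1 - w(N), where cost is the maximum number of queries over all inputs and each query is either an input bit or the XOR of two input bits. -/
import Mathlib


/-- A decision tree that may query a single input bit or the XOR of two
input bits, each at unit cost. -/
inductive XorTree (N : ℕ) where
  | leaf (b : Bool)
  | bit (i : Fin N) (t0 t1 : XorTree N)
  | xorq (i j : Fin N) (t0 t1 : XorTree N)

/-- Evaluation of an XOR decision tree on an input. -/
def XorTree.eval {N : ℕ} : XorTree N → (Fin N → Bool) → Bool
  | .leaf b, _ => b
  | .bit i t0 t1, X => if X i then t1.eval X else t0.eval X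
  | .xorq i j t0 t1, X => if xor (X i) (X j) then t1.eval X else t0.eval X

/-- Cost (worst-case number of queries = depth) of an XOR decision tree. -/
def XorTree.cost {N : ℕ} : XorTree N → ℕ
  | .leaf _ => 0
  | .bit _ t0 t1 => 1 + max t0.cost t1.cost
  | .xorq _ _ t0 t1 => 1 + max t0.cost t1.cost

namespace Stmt9

def w (n : ℕ) : ℕ := (Nat.digits 2 n).sum

lemma w_rec (n : ℕ) (h : 0 < n) : w n = n % 2 + w (n / 2) := by
  unfold w
  rw [Nat.digits_def' (by norm_num : 1 < 2) h]
  simp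

lemma w_le (n : ℕ) : w n ≤ n := by
  induction n using Nat.strong_induction_on with
  | _ n ih =>
    rcases Nat.eq_zero_or_pos n with h | h
    · simp [h, w]
    · have h2 := ih (n / 2) (Nat.div_lt_self h one_lt_two)
      have h3 := w_rec n h
      omega

def D (n : ℕ) : ℕ := n - w n

lemma D_rec (n : ℕ) : D n = n / 2 + D (n / 2) := by
  rcases Nat.eq_zero_or_pos n with h | h
  · simp [h, D, w]
  · have h1 := w_le (n / 2)
    have h2 := w_rec n h
    unfold D
    omega

lemma D_le_succ (n : ℕ) : D n ≤ D (n + 1) := by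
  induction n using Nat.strong_induction_on with
  | _ n ih =>
    rcases Nat.eq_zero_or_pos n with h | h
    · simp [h, D, w]
    · rw [D_rec n, D_rec (n + 1)]
      rcases Nat.mod_two_eq_zero_or_one n with he | ho
      · have : (n + 1) / 2 = n / 2 := by omega
        rw [this]
      · have h2 : (n + 1) / 2 = n / 2 + 1 := by omega
        have h3 := ih (n / 2) (by omega)
        rw [h2]; omega

abbrev Blk (N : ℕ) := Fin N × ℕ

def ssum {N : ℕ} (L : List (Blk N)) : ℕ := (L.map Prod.snd).sum

def bsum {N : ℕ} (X : Fin N → Bool) (L : List (Blk N)) : ℤ :=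
  (L.map fun B => if X B.1 then (B.2 : ℤ) else -(B.2 : ℤ)).sum

lemma bsum_bounds {N : ℕ} (X : Fin N → Bool) (L : List (Blk N)) :
    bsum X L ≤ (ssum L : ℤ) ∧ -(ssum L : ℤ) ≤ bsum X L := by
  induction L with
  | nil => simp [bsum, ssum]
  | cons B L ih =>
    have h1 : bsum X (B :: L) = (if X B.1 then (B.2 : ℤ) else -(B.2 : ℤ)) + bsum X L := by
      simp [bsum]
    have h2 : (ssum (B :: L) : ℤ) = (B.2 : ℤ) + (ssum L : ℤ) := by
      simp [ssum]
    cases hB : X B.1 <;> simp only [h1, h2, hB, if_true, if_false] <;> omega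

def finalT {N : ℕ} : List (Blk N) → XorTree N
  | [] => .leaf true
  | (a, _) :: _ => .bit a (.leaf false) (.leaf true)

def build {N : ℕ} : List (Blk N) → List (Blk N) → List (Blk N) → XorTree N
  | [], [], left => finalT left
  | [], b :: nxt, left => build (b :: nxt) [] left
  | [A], nxt, left => build nxt [] (A :: left)
  | A :: B :: cur, nxt, left =>
      .xorq A.1 B.1 (build cur ((A.1, A.2 + B.2) :: nxt) left) (build cur nxt left)
  termination_by cur nxt _ => 2 * (cur.length + nxt.length) + min nxt.length 1
  decreasing_by all_goals (simp; try omega)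

def dlt {N : ℕ} (X : Fin N → Bool) : ℤ :=
  ((Finset.univ.filter fun i => X i = true).card : ℤ) -
    ((Finset.univ.filter fun i => X i = false).card : ℤ)

end Stmt9

namespace Stmt9

theorem cost_build {N : ℕ} (cur nxt left : List (Blk N)) :
    (build cur nxt left).cost ≤ cur.length / 2 + D (nxt.length + cur.length / 2) + 1 := by
  induction cur, nxt, left using build.induct with
  | case1 left =>
    rw [build]
    cases left with
    | nil => simp [finalT, XorTree.cost]
    | cons A L =>
      obtain ⟨a, m⟩ := A
      simp [finalT, XorTree.cost]
  | case2 b nxt left ih =>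
    rw [build]
    simp only [List.length_cons, List.length_nil, Nat.add_zero, Nat.zero_add,
      Nat.reduceDiv] at ih ⊢
    have := D_rec (nxt.length + 1)
    omega
  | case3 A nxt left ih =>
    rw [build]
    simp only [List.length_cons, List.length_nil, List.length_singleton,
      Nat.add_zero, Nat.zero_add, Nat.reduceDiv] at ih ⊢
    have := D_rec nxt.length
    omega
  | case4 A B cur nxt left ih0 ih1 =>
    rw [build]
    simp only [XorTree.cost, List.length_cons] at *
    have hmono := D_le_succ (nxt.length + cur.length / 2)
    have e1 : nxt.length + 1 + cur.length / 2 = nxt.length + cur.length / 2 + 1 := by omega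
    rw [e1] at ih0
    have e2 : (cur.length + 1 + 1) / 2 = cur.length / 2 + 1 := by omega
    rw [e2]
    have e3 : nxt.length + (cur.length / 2 + 1) = nxt.length + cur.length / 2 + 1 := by omega
    rw [e3]
    omega

end Stmt9

namespace Stmt9

lemma xor_eq_false' {a b : Bool} (h : xor a b = false) : b = a := by
  cases a <;> cases b <;> simp_all

lemma xor_eq_true' {a b : Bool} (h : xor a b = true) : b = !a := by
  cases a <;> cases b <;> simp_all

theorem eval_build {N : ℕ} (X : Fin N → Bool) (cur nxt left : List (Blk N)) :
    ∀ s : ℕ, (∀ B ∈ cur, B.2 = s) → (∀ B ∈ nxt, B.2 = 2 * s) → ssum left < s →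
      (left = [] ∨ ∃ A L, left = A :: L ∧ ssum L < A.2) →
      dlt X = bsum X (cur ++ nxt ++ left) →
      (build cur nxt left).eval X = decide (0 ≤ dlt X) := by
  induction cur, nxt, left using build.induct with
  | case1 left =>
    intro s hc hn hl hd h1
    rcases hd with rfl | ⟨A, L, rfl, hAL⟩
    · rw [build]
      simp only [bsum, List.append_nil, List.nil_append, List.map_nil, List.sum_nil] at h1
      simp [finalT, XorTree.eval, h1]
    · rw [build]
      obtain ⟨a, m⟩ := A
      obtain ⟨hb1, hb2⟩ := bsum_bounds X L
      have h1' : dlt X = (if X a then (m : ℤ) else -(m : ℤ)) + bsum X L := by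
        simpa [bsum] using h1
      have hm : (ssum L : ℤ) < (m : ℤ) := by exact_mod_cast hAL
      cases hX : X a
      · have hneg : ¬ (0 ≤ dlt X) := by rw [h1', hX]; simp; omega
        simp [finalT, XorTree.eval, hX, hneg]
      · have hpos : 0 ≤ dlt X := by rw [h1', hX]; simp; omega
        simp [finalT, XorTree.eval, hX, hpos]
  | case2 b nxt left ih =>
    intro s hc hn hl hd h1
    rw [build]
    exact ih (2 * s) hn (by simp) (by omega) hd (by simpa using h1)
  | case3 A nxt left ih =>
    intro s hc hn hl hd h1
    rw [build]
    have hA : A.2 = s := hc A (by simp)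
    refine ih (2 * s) hn (by simp) ?_ (Or.inr ⟨A, left, rfl, by omega⟩) ?_
    · simp only [ssum, List.map_cons, List.sum_cons]
      have : ssum left = (left.map Prod.snd).sum := rfl
      omega
    · rw [h1]
      simp only [bsum, List.map_append, List.sum_append, List.map_cons, List.sum_cons,
        List.map_nil, List.sum_nil]
      ring
  | case4 A B cur nxt left ih0 ih1 =>
    intro s hc hn hl hd h1
    have hA : A.2 = s := hc A (by simp)
    have hB : B.2 = s := hc B (by simp)
    have hc' : ∀ C ∈ cur, C.2 = s := fun C hC => hc C (by simp [hC])
    rw [build]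
    simp only [XorTree.eval]
    cases hAB : xor (X A.1) (X B.1)
    · -- equal values: merge
      have hEq : X B.1 = X A.1 := xor_eq_false' hAB
      simp only [Bool.false_eq_true, if_false]
      refine ih0 s hc' ?_ hl hd ?_
      · intro C hC
        rcases List.mem_cons.mp hC with rfl | hC'
        · simp; omega
        · exact hn C hC'
      · rw [h1]
        simp only [bsum, List.map_append, List.sum_append, List.map_cons, List.sum_cons, hEq]
        cases h : X A.1 <;> simp [h] <;> push_cast <;> ring
    · -- different values: cancel
      have hNe : X B.1 = ! X A.1 := xor_eq_true' hAB
      simp only [if_true]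
      refine ih1 s hc' hn hl hd ?_
      · rw [h1]
        simp only [bsum, List.map_append, List.sum_append, List.map_cons, List.sum_cons,
          hNe, hA, hB]
        cases h : X A.1 <;> simp [h] <;> push_cast <;> ring

end Stmt9

/-- There is an XOR decision tree computing MAJORITY (1 iff at least as many
ones as zeros) on N-bit inputs with cost at most N + 1 - w(N). -/
theorem stmt_9 (N : ℕ) (hN : 1 ≤ N) :
    ∃ T : XorTree N,
      (∀ X : Fin N → Bool, T.eval X =
        decide ((Finset.univ.filter fun i => X i = false).card ≤
                (Finset.univ.filter fun i => X i = true).card)) ∧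
      T.cost ≤ N + 1 - (Nat.digits 2 N).sum := by
  classical
  refine ⟨Stmt9.build ((List.finRange N).map fun i => (i, (1 : ℕ))) [] [], ?_, ?_⟩
  · intro X
    have hdlt : Stmt9.dlt X =
        Stmt9.bsum X (((List.finRange N).map fun i => (i, (1 : ℕ))) ++ [] ++ []) := by
      simp only [List.append_nil]
      unfold Stmt9.dlt Stmt9.bsum
      rw [List.map_map]
      have : ((fun B : Stmt9.Blk N => if X B.1 then (B.2 : ℤ) else -(B.2 : ℤ)) ∘
          fun i => (i, (1 : ℕ))) = fun i => if X i then (1 : ℤ) else -1 := by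
        funext i; simp
      rw [this, ← Fin.sum_univ_def]
      rw [show (fun i : Fin N => if X i then (1 : ℤ) else -1) =
          fun i => (if X i = true then (1 : ℤ) else 0) - (if X i = false then (1 : ℤ) else 0)
        from by funext i; cases h : X i <;> simp [h]]
      rw [Finset.sum_sub_distrib]
      rw [Finset.sum_boole, Finset.sum_boole]
    have he := Stmt9.eval_build X _ [] [] 1 (by simp) (by simp)
      (by simp [Stmt9.ssum]) (Or.inl rfl) hdlt
    rw [he]
    have : (0 ≤ Stmt9.dlt X) ↔
        ((Finset.univ.filter fun i => X i = false).card ≤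
          (Finset.univ.filter fun i => X i = true).card) := by
      unfold Stmt9.dlt
      constructor <;> intro h <;> [exact_mod_cast sub_nonneg.mp h;
        exact sub_nonneg.mpr (by exact_mod_cast h)]
    simp [this]
  · have hc := Stmt9.cost_build ((List.finRange N).map fun i => (i, (1 : ℕ))) [] []
    simp only [List.length_map, List.length_finRange, List.length_nil, Nat.zero_add,
      Nat.add_zero] at hc
    have h1 := Stmt9.D_rec N
    have h2 := Stmt9.w_le N
    have h3 : (Nat.digits 2 N).sum = Stmt9.w N := rfl
    unfold Stmt9.D at h1 hc
    omega
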